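/- Let R be a Poisson random variable with mean λ > 0 and let 0 < α < 1 with k = αλ a positive integer. Then P(R ≤ αλ) < e^{-λ(1-α)²/2} / ((1-α)·√(2παλ)). -/

import Mathlib

open Real Filter Set

lemma sqrt_pi_le_stirlingSeq (n : ℕ) : Real.sqrt π ≤ Stirling.stirlingSeq (n+1) := by
  have hanti : Antitone (fun n => Stirling.stirlingSeq (n+1)) := fun m n h => by
    have h2 := Stirling.log_stirlingSeq'_antitone h
    simp only [Function.comp] at h2
    exact (Real.log_le_log_iff (Stirling.stirlingSeq'_pos n) (Stirling.stirlingSeq'_pos m)).mp h2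
  have htend : Tendsto (fun n => Stirling.stirlingSeq (n+1)) atTop (nhds (Real.sqrt π)) :=
    Stirling.tendsto_stirlingSeq_sqrt_pi.comp (tendsto_add_atTop_nat 1)
  exact hanti.le_of_tendsto htend n

lemma factorial_lb (k : ℕ) (hk : 1 ≤ k) :
    Real.sqrt (2*π*k) * ((k : ℝ)/Real.exp 1)^k ≤ (k.factorial : ℝ) := by
  obtain ⟨n, rfl⟩ : ∃ n, k = n + 1 := ⟨k - 1, (Nat.succ_pred_eq_of_pos hk).symm⟩
  have h := sqrt_pi_le_stirlingSeq n
  rw [Stirling.stirlingSeq] at h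
  have hden : 0 < Real.sqrt (2 * ((n+1 : ℕ) : ℝ)) * (((n+1 : ℕ) : ℝ) / Real.exp 1) ^ (n+1) := by
    positivity
  rw [le_div_iff₀ hden] at h
  calc Real.sqrt (2*π*(n+1 : ℕ)) * (((n+1:ℕ) : ℝ)/Real.exp 1)^(n+1)
      = Real.sqrt π * (Real.sqrt (2 * ((n+1:ℕ):ℝ)) * (((n+1:ℕ):ℝ)/Real.exp 1)^(n+1)) := by
        rw [← mul_assoc, ← Real.sqrt_mul pi_pos.le]
        ring_nf
    _ ≤ _ := h

lemma key_iq (α : ℝ) (h0 : 0 < α) (h1 : α < 1) :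
    (1-α)^2/2 ≤ 1 - α + α * Real.log α := by
  set f : ℝ → ℝ := fun x => 1 - x + x * Real.log x - (1-x)^2/2 with hf
  have hderiv : ∀ x ∈ interior (Icc α 1), HasDerivAt f (Real.log x + 1 - x) x := by
    intro x hx
    rw [interior_Icc] at hx
    have hx0 : 0 < x := lt_trans h0 hx.1
    have h1' : HasDerivAt (fun x : ℝ => 1 - x) (-1) x := by
      simpa using (hasDerivAt_id x).const_sub 1
    have h2' : HasDerivAt (fun x : ℝ => x * Real.log x) (Real.log x + 1) x := by
      simpa using (Real.hasDerivAt_mul_log hx0.ne')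
    have h3' : HasDerivAt (fun x : ℝ => (1-x)^2/2) (x - 1) x := by
      have := ((h1'.pow 2).div_const 2)
      simpa [pow_one, mul_comm] using this.congr_deriv (by ring)
    have := (h1'.add h2').sub h3'
    exact this.congr_deriv (by ring)
  have hcont : ContinuousOn f (Icc α 1) := by
    apply ContinuousOn.sub
    apply ContinuousOn.add
    · fun_prop
    · exact continuousOn_id.mul (Real.continuousOn_log.mono (fun x hx => ne_of_gt (lt_of_lt_of_le h0 hx.1)))
    · fun_prop
  have hanti : AntitoneOn f (Icc α 1) := by
    apply antitoneOn_of_deriv_nonpos (convex_Icc α 1) hcont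
    · intro x hx
      exact (hderiv x hx).differentiableAt.differentiableWithinAt
    · intro x hx
      rw [(hderiv x hx).deriv]
      rw [interior_Icc] at hx
      have := Real.log_le_sub_one_of_pos (lt_trans h0 hx.1)
      linarith
  have := hanti (left_mem_Icc.mpr h1.le) (right_mem_Icc.mpr h1.le) h1.le
  simp only [hf] at this
  simp at this
  linarith

lemma term_bound (lam α : ℝ) (hlam : 0 < lam) (hα0 : 0 < α) (k : ℕ)
    (hkα : (k : ℝ) = α * lam) :
    ∀ j, j ≤ k → lam^(k-j) / (((k-j).factorial : ℕ) : ℝ)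
      ≤ lam^k / (k.factorial : ℝ) * α^j := by
  intro j
  induction j with
  | zero => intro _; simp
  | succ j ih =>
    intro h
    have hj : j ≤ k := Nat.le_of_succ_le h
    set m := k - (j+1) with hm
    have hm1 : k - j = m + 1 := by omega
    have hkey : lam^m / ((m.factorial : ℕ) : ℝ)
        ≤ α * (lam^(m+1) / (((m+1).factorial : ℕ) : ℝ)) := by
      have hfac : 0 < ((m.factorial : ℕ) : ℝ) := by positivity
      have h1 : ((m:ℝ) + 1) ≤ α * lam := by
        rw [← hkα]
        exact_mod_cast (by omega : m + 1 ≤ k)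
      have hone : (1:ℝ) ≤ α * lam / ((m:ℝ)+1) := (one_le_div (by positivity)).mpr h1
      calc lam^m / ((m.factorial : ℕ) : ℝ)
          ≤ α * lam / ((m:ℝ)+1) * (lam^m / ((m.factorial : ℕ) : ℝ)) :=
            le_mul_of_one_le_left (by positivity) hone
        _ = α * (lam^(m+1) / (((m+1).factorial : ℕ) : ℝ)) := by
            rw [Nat.factorial_succ, pow_succ]
            push_cast
            field_simp
    have ih' := ih hj
    rw [hm1] at ih'
    calc lam^(k-(j+1)) / (((k-(j+1)).factorial : ℕ) : ℝ)
        ≤ α * (lam^(m+1) / (((m+1).factorial : ℕ) : ℝ)) := hkey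
      _ ≤ α * (lam^k / (k.factorial : ℝ) * α^j) := by
          exact mul_le_mul_of_nonneg_left ih' hα0.le
      _ = lam^k / (k.factorial : ℝ) * α^(j+1) := by ring

theorem poisson_lower_tail (lam α : ℝ) (hlam : 0 < lam) (hα0 : 0 < α) (hα1 : α < 1)
    (k : ℕ) (hk : 1 ≤ k) (hkα : (k : ℝ) = α * lam) :
    (∑ r ∈ Finset.range (k + 1), Real.exp (-lam) * lam ^ r / (r.factorial : ℝ))
      < Real.exp (-(lam * (1 - α) ^ 2 / 2)) / ((1 - α) * Real.sqrt (2 * π * α * lam)) := by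
  have h1α : 0 < 1 - α := by linarith
  have hkpos : (0:ℝ) < k := by exact_mod_cast hk
  have hfacpos : (0:ℝ) < (k.factorial : ℝ) := by positivity
  -- Step 1: sum bound
  have hterm : ∀ r ∈ Finset.range (k+1),
      lam ^ r / (r.factorial : ℝ) ≤ lam^k / (k.factorial : ℝ) * α^(k-r) := by
    intro r hr
    have hr' : r ≤ k := Nat.lt_succ_iff.mp (Finset.mem_range.mp hr)
    have := term_bound lam α hlam hα0 k hkα (k - r) (Nat.sub_le k r)
    rwa [Nat.sub_sub_self hr'] at this
  have hsum1 : (∑ r ∈ Finset.range (k+1), lam ^ r / (r.factorial : ℝ))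
      ≤ lam^k / (k.factorial : ℝ) * ∑ j ∈ Finset.range (k+1), α^j := by
    calc (∑ r ∈ Finset.range (k+1), lam ^ r / (r.factorial : ℝ))
        ≤ ∑ r ∈ Finset.range (k+1), lam^k / (k.factorial : ℝ) * α^(k-r) :=
          Finset.sum_le_sum hterm
      _ = lam^k / (k.factorial : ℝ) * ∑ r ∈ Finset.range (k+1), α^(k-r) := by
          rw [Finset.mul_sum]
      _ = _ := by
          congr 1
          have := Finset.sum_range_reflect (fun j => α^j) (k+1)
          simpa using this
  have hgeom : (∑ j ∈ Finset.range (k+1), α^j) < 1 / (1-α) := by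
    rw [geom_sum_eq hα1.ne]
    have heq : (α^(k+1) - 1)/(α - 1) = (1 - α^(k+1))/(1-α) := by
      rw [div_eq_div_iff (by linarith) (by linarith)]
      ring
    rw [heq]
    have hpow : 0 < α^(k+1) := pow_pos hα0 _
    gcongr
    linarith
  have hS : (∑ r ∈ Finset.range (k+1), lam ^ r / (r.factorial : ℝ))
      < lam^k / (k.factorial : ℝ) / (1-α) := by
    calc (∑ r ∈ Finset.range (k+1), lam ^ r / (r.factorial : ℝ))
        ≤ lam^k / (k.factorial : ℝ) * ∑ j ∈ Finset.range (k+1), α^j := hsum1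
      _ < lam^k / (k.factorial : ℝ) * (1/(1-α)) := by
          apply mul_lt_mul_of_pos_left hgeom
          positivity
      _ = lam^k / (k.factorial : ℝ) / (1-α) := by ring
  -- Step 2: Stirling
  have hstir := factorial_lb k hk
  have hden : (0:ℝ) < Real.sqrt (2*π*k) * ((k : ℝ)/Real.exp 1)^k := by positivity
  have hfd : lam^k / (k.factorial : ℝ)
      ≤ lam^k / (Real.sqrt (2*π*k) * ((k : ℝ)/Real.exp 1)^k) := by
    gcongr
  -- Step 3: exponential bound
  have hsq : (0:ℝ) < Real.sqrt (2*π*(k:ℝ)) := Real.sqrt_pos.mpr (by positivity)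
  have hpk : (0:ℝ) < ((k : ℝ)/Real.exp 1)^k := by positivity
  have hA : Real.exp (-lam) * (lam^k / (((k : ℝ)/Real.exp 1)^k))
      ≤ Real.exp (-(lam * (1 - α) ^ 2 / 2)) := by
    have hexp1 : Real.exp 1 / α = Real.exp (1 - Real.log α) := by
      rw [Real.exp_sub, Real.exp_log hα0]
    have hquot : lam / ((k:ℝ)/Real.exp 1) = Real.exp 1 / α := by
      rw [hkα]
      field_simp
    have heq : Real.exp (-lam) * (lam^k / (((k : ℝ)/Real.exp 1)^k))
        = Real.exp (-lam + k * (1 - Real.log α)) := by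
      rw [← div_pow, hquot, hexp1, ← Real.exp_nat_mul, ← Real.exp_add]
    rw [heq]
    apply Real.exp_le_exp.mpr
    have hkey := key_iq α hα0 hα1
    have hmul := mul_le_mul_of_nonneg_left hkey hlam.le
    rw [hkα]
    nlinarith [hmul]
  -- Final assembly
  have h2pk : 2*π*α*lam = 2*π*(k:ℝ) := by rw [hkα]; ring
  have hLHS : (∑ r ∈ Finset.range (k + 1), Real.exp (-lam) * lam ^ r / (r.factorial : ℝ))
      = Real.exp (-lam) * ∑ r ∈ Finset.range (k+1), lam ^ r / (r.factorial : ℝ) := by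
    rw [Finset.mul_sum]
    congr 1
    ext r
    rw [mul_div_assoc]
  rw [hLHS, h2pk]
  calc Real.exp (-lam) * ∑ r ∈ Finset.range (k+1), lam ^ r / (r.factorial : ℝ)
      < Real.exp (-lam) * (lam^k / (k.factorial : ℝ) / (1-α)) := by
        exact mul_lt_mul_of_pos_left hS (Real.exp_pos _)
    _ ≤ Real.exp (-lam) * (lam^k / (Real.sqrt (2*π*(k:ℝ)) * ((k : ℝ)/Real.exp 1)^k) / (1-α)) := by
        gcongr
    _ = Real.exp (-lam) * (lam^k / (((k : ℝ)/Real.exp 1)^k))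
          / ((1-α) * Real.sqrt (2*π*(k:ℝ))) := by
        field_simp
    _ ≤ Real.exp (-(lam * (1 - α) ^ 2 / 2)) / ((1-α) * Real.sqrt (2*π*(k:ℝ))) := by
        gcongr
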